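/- Let G be a locally finite infinite graph with an injective edge labelling U, let x be a vertex, and suppose that the invasion tree InvPerc(x) at some finite stage T_n is contained in an infinite cluster of the subgraph {e : U(e) ≤ p} and all edges of T_n have label ≤ p. Then all subsequently invaded edges have label ≤ p; i.e., once the invasion enters an infinite p-cluster it never leaves it. -/
import Mathlib


open SimpleGraph

variable {V : Type*}

/-- The total weight of (the edge set of) a graph. -/
noncomputable def graphWeight [Fintype V] (T : SimpleGraph V) (w : Sym2 V → ℝ) : ℝ :=
  ∑ e ∈ T.edgeSet.toFinite.toFinset, w e

/-- `T` is a spanning tree of `G`: a subgraph (on all the vertices) which is a tree. -/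
def IsSpanningTree (G T : SimpleGraph V) : Prop := T ≤ G ∧ T.IsTree

/-- `T` is a minimal spanning tree of `G` with respect to the weights `w`. -/
def IsMST [Fintype V] (G : SimpleGraph V) (w : Sym2 V → ℝ) (T : SimpleGraph V) : Prop :=
  IsSpanningTree G T ∧
    ∀ T' : SimpleGraph V, IsSpanningTree G T' → graphWeight T w ≤ graphWeight T' w


/-- The vertices spanned by the starting vertex `x` together with a set `S` of edges. -/
def spannedVerts (x : V) (S : Set (Sym2 V)) : Set V := {x} ∪ {v | ∃ e ∈ S, v ∈ e}

/-- The edge boundary of a vertex set `A`: edges of `G` with exactly one endpoint in `A`. -/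
def edgeBoundary (G : SimpleGraph V) (A : Set V) : Set (Sym2 V) :=
  {e | e ∈ G.edgeSet ∧ ∃ a ∈ A, ∃ b ∉ A, e = s(a, b)}

/-- One step of the invasion process: add the boundary edge of smallest label (if it exists). -/
noncomputable def invStep (G : SimpleGraph V) (U : Sym2 V → ℝ) (x : V) (S : Set (Sym2 V)) :
    Set (Sym2 V) :=
  letI := Classical.propDecidable
  if h : ∃ e ∈ edgeBoundary G (spannedVerts x S),
      ∀ f ∈ edgeBoundary G (spannedVerts x S), U e ≤ U f
  then insert h.choose S else S

/-- The invasion tree `T_n` after `n` steps, started at `x`. -/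
noncomputable def invTree (G : SimpleGraph V) (U : Sym2 V → ℝ) (x : V) : ℕ → Set (Sym2 V)
  | 0 => ∅
  | n + 1 => invStep G U x (invTree G U x n)

/-- The invasion percolation tree of `x`: the union of the invasion trees `T_n`. -/
noncomputable def InvPerc (G : SimpleGraph V) (U : Sym2 V → ℝ) (x : V) : Set (Sym2 V) :=
  ⋃ n, invTree G U x n

private lemma spannedVerts_finite (x : V) {S : Set (Sym2 V)} (hS : S.Finite) :
    (spannedVerts x S).Finite := by
  apply Set.Finite.union (Set.finite_singleton x)
  have hsub : {v : V | ∃ e ∈ S, v ∈ e} ⊆ ⋃ e ∈ S, {v | v ∈ e} := by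
    rintro v ⟨e, he, hv⟩; exact Set.mem_biUnion he hv
  refine Set.Finite.subset (hS.biUnion ?_) hsub
  intro e _
  induction e using Sym2.ind with
  | _ a b =>
    have : {v : V | v ∈ s(a,b)} = {a, b} := by ext v; simp [Sym2.mem_iff]
    rw [this]; exact (Set.finite_singleton b).insert a

private lemma walk_crossing {H : SimpleGraph V} {A : Set V} :
    ∀ {u w : V}, H.Walk u w → u ∈ A → w ∉ A →
      ∃ a ∈ A, ∃ b ∉ A, H.Adj a b := by
  intro u w wk
  induction wk with
  | nil => exact fun hu hw => absurd hu hw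
  | @cons u v w h q ih =>
    intro hu hw
    by_cases hm : v ∈ A
    · exact ih hm hw
    · exact ⟨u, hu, v, hm, h⟩

private lemma invTree_finite (G : SimpleGraph V) (U : Sym2 V → ℝ) (x : V) (n : ℕ) :
    (invTree G U x n).Finite := by
  induction n with
  | zero => simp [invTree]
  | succ n ih =>
    show (invStep G U x (invTree G U x n)).Finite
    unfold invStep
    split
    · exact ih.insert _
    · exact ih

/-- Once the invasion tree is contained in an infinite cluster of the subgraph of edges with
label `≤ p` (and all invaded edges so far have label `≤ p`), all subsequently invaded edges
have label `≤ p`: the invasion never leaves the infinite `p`-cluster. -/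
theorem invPerc_stays_in_infinite_cluster [Infinite V] (G : SimpleGraph V)
    (hlf : ∀ v : V, (G.neighborSet v).Finite)
    (U : Sym2 V → ℝ) (hU : Set.InjOn U G.edgeSet) (x : V) (p : ℝ) (n : ℕ)
    (hinf : {v | (G.deleteEdges {e | p < U e}).Reachable x v}.Infinite)
    (hcontain : ∀ v ∈ spannedVerts x (invTree G U x n),
      (G.deleteEdges {e | p < U e}).Reachable x v)
    (hlab : ∀ e ∈ invTree G U x n, U e ≤ p) :
    ∀ m, n ≤ m → ∀ e ∈ invTree G U x m, U e ≤ p := by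
  classical
  set H := G.deleteEdges {e | p < U e} with hHdef
  suffices h : ∀ m, n ≤ m →
      (∀ v ∈ spannedVerts x (invTree G U x m), H.Reachable x v) ∧
      (∀ e ∈ invTree G U x m, U e ≤ p) by
    exact fun m hm => (h m hm).2
  intro m hm
  induction m with
  | zero =>
    have hn0 : n = 0 := Nat.le_zero.mp hm
    subst hn0; exact ⟨hcontain, hlab⟩
  | succ m ih =>
    rcases eq_or_lt_of_le hm with heq | hlt
    · rw [← heq]; exact ⟨hcontain, hlab⟩
    have hnm : n ≤ m := Nat.lt_succ_iff.mp hlt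
    obtain ⟨hreach, hlabS⟩ := ih hnm
    set S := invTree G U x m with hSdef
    set A := spannedVerts x S with hAdef
    have hxA : x ∈ A := Or.inl rfl
    -- there is a boundary edge of label ≤ p
    have hbdry : ∃ e' ∈ edgeBoundary G A, U e' ≤ p := by
      have hAfin : A.Finite := spannedVerts_finite x (invTree_finite G U x m)
      obtain ⟨w, hw, hwA⟩ := (hinf.diff hAfin).nonempty
      obtain ⟨a, ha, b, hb, hab⟩ := walk_crossing hw.some hxA hwA
      rw [hHdef, deleteEdges_adj] at hab
      refine ⟨s(a, b), ⟨hab.1, a, ha, b, hb, rfl⟩, ?_⟩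
      exact not_lt.mp hab.2
    obtain ⟨e', he'b, he'p⟩ := hbdry
    show (∀ v ∈ spannedVerts x (invStep G U x S), H.Reachable x v) ∧
      (∀ e ∈ invStep G U x S, U e ≤ p)
    unfold invStep
    split
    case isFalse => exact ⟨hreach, hlabS⟩
    case isTrue hex =>
      obtain ⟨hcb, hcmin⟩ := hex.choose_spec
      set c := hex.choose with hc
      have hcp : U c ≤ p := le_trans (hcmin e' he'b) he'p
      obtain ⟨hcE, a, ha, b, hb, hcab⟩ := hcb
      have hGab : G.Adj a b := by rw [← mem_edgeSet, ← hcab]; exact hcE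
      have hHab : H.Adj a b := by
        rw [hHdef, deleteEdges_adj]
        refine ⟨hGab, ?_⟩
        simp only [Set.mem_setOf_eq, ← hcab, not_lt]
        exact hcp
      have hbreach : H.Reachable x b := (hreach a ha).trans hHab.reachable
      constructor
      · rintro v hv
        rcases hv with hv | ⟨e, he, hve⟩
        · rw [Set.mem_singleton_iff] at hv; subst hv; exact Reachable.refl _
        rcases he with rfl | heS
        · rw [hcab] at hve
          rcases Sym2.mem_iff.mp hve with rfl | rfl
          · exact hreach v ha
          · exact hbreach
        · exact hreach v (Or.inr ⟨e, heS, hve⟩)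
      · rintro e he
        rcases he with rfl | heS
        · exact hcp
        · exact hlabS e heS
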